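/- Let X and Y be metric spaces and suppose X embeds weakly into Y with distortion K (for every Δ > 0 there is a 1-Lipschitz g_Δ: X → Y such that d_X(x,y) ≥ Δ implies d_Y(g_Δ(x), g_Δ(y)) ≥ Δ/K). Then the weak Markov type 2 constants satisfy M₂ʷ(X) ≤ K · M₂ʷ(Y). -/
import Mathlib


open Finset

/-- A metric space `X` has weak Markov type 2 with constant `C` if for every
stationary reversible finite Markov chain (stationary distribution `π`, transition
matrix `A`), every `f : {1,…,n} → X`, every time `t` and every `ζ > 0`,
`Pr(d(f(Z₀),f(Z_t))² ≥ tζ) ≤ C² ζ⁻¹ E d(f(Z₀),f(Z₁))²`. -/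
def HasWeakMarkovType2 (X : Type*) [MetricSpace X] (C : ℝ) : Prop :=
  ∀ (n : ℕ) (π : Fin n → ℝ) (A : Matrix (Fin n) (Fin n) ℝ),
    (∀ i, 0 ≤ π i) → (∑ i, π i = 1) →
    (∀ i j, 0 ≤ A i j) → (∀ i, ∑ j, A i j = 1) →
    (∀ j, ∑ i, π i * A i j = π j) →
    (∀ i j, π i * A i j = π j * A j i) →
    ∀ (f : Fin n → X) (t : ℕ), 1 ≤ t → ∀ ζ : ℝ, 0 < ζ →
      (∑ i, ∑ j, if (t : ℝ) * ζ ≤ dist (f i) (f j) ^ 2 then π i * (A ^ t) i j else 0) ≤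
        C ^ 2 * ζ⁻¹ * ∑ i, ∑ j, π i * A i j * dist (f i) (f j) ^ 2

/-- If `X` embeds weakly into `Y` with distortion `K` (for every `Δ > 0` there is a
`1`-Lipschitz `g_Δ : X → Y` with `d(x,y) ≥ Δ → d(g_Δ x, g_Δ y) ≥ Δ/K`), then the
weak Markov type 2 constants satisfy `M₂ʷ(X) ≤ K · M₂ʷ(Y)`. -/
theorem weak_markov_type_of_weak_embedding
    {X Y : Type*} [MetricSpace X] [MetricSpace Y] (K : ℝ) (hK : 0 < K)
    (hemb : ∀ Δ : ℝ, 0 < Δ → ∃ g : X → Y, LipschitzWith 1 g ∧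
      ∀ x y : X, Δ ≤ dist x y → Δ / K ≤ dist (g x) (g y))
    (C : ℝ) (hC : 0 ≤ C) (hY : HasWeakMarkovType2 Y C) :
    HasWeakMarkovType2 X (K * C) := by
  intro n π A hπ hπ1 hA hA1 hstat hrev f t ht ζ hζ
  have htζ : 0 < (t : ℝ) * ζ := by
    apply mul_pos _ hζ
    exact_mod_cast Nat.lt_of_lt_of_le Nat.zero_lt_one ht
  set Δ := Real.sqrt ((t : ℝ) * ζ) with hΔ
  have hΔpos : 0 < Δ := Real.sqrt_pos.mpr htζ
  obtain ⟨g, hg1, hg2⟩ := hemb Δ hΔpos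
  have hK2 : (0:ℝ) < K ^ 2 := by positivity
  have hζ' : 0 < ζ / K ^ 2 := div_pos hζ hK2
  have h1 := hY n π A hπ hπ1 hA hA1 hstat hrev (g ∘ f) t ht (ζ / K ^ 2) hζ'
  have hApow : ∀ s : ℕ, ∀ i j, 0 ≤ (A ^ s) i j := by
    intro s
    induction s with
    | zero => intro i j; simp [Matrix.one_apply]; split_ifs <;> norm_num
    | succ s ih =>
      intro i j
      rw [pow_succ, Matrix.mul_apply]
      exact Finset.sum_nonneg fun k _ => mul_nonneg (ih i k) (hA k j)
  have hle : (∑ i, ∑ j, if (t : ℝ) * ζ ≤ dist (f i) (f j) ^ 2 then π i * (A ^ t) i j else 0)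
      ≤ ∑ i, ∑ j, if (t : ℝ) * (ζ / K ^ 2) ≤ dist ((g ∘ f) i) ((g ∘ f) j) ^ 2
          then π i * (A ^ t) i j else 0 := by
    apply Finset.sum_le_sum; intro i _
    apply Finset.sum_le_sum; intro j _
    by_cases h : (t : ℝ) * ζ ≤ dist (f i) (f j) ^ 2
    · rw [if_pos h, if_pos]
      have hd : Δ ≤ dist (f i) (f j) := by
        have := Real.sqrt_le_sqrt h
        rwa [Real.sqrt_sq dist_nonneg] at this
      have hgd : Δ / K ≤ dist (g (f i)) (g (f j)) := hg2 _ _ hd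
      have hsq : (Δ / K) ^ 2 ≤ dist (g (f i)) (g (f j)) ^ 2 := by
        apply pow_le_pow_left₀ (by positivity) hgd
      calc (t : ℝ) * (ζ / K ^ 2) = ((t : ℝ) * ζ) / K ^ 2 := by ring
        _ = Δ ^ 2 / K ^ 2 := by rw [Real.sq_sqrt htζ.le]
        _ = (Δ / K) ^ 2 := by rw [div_pow]
        _ ≤ _ := hsq
    · rw [if_neg h]
      split_ifs with h'
      · exact mul_nonneg (hπ i) (hApow t i j)
      · exact le_refl 0
  have hlip : ∀ i j : Fin n, dist ((g ∘ f) i) ((g ∘ f) j) ≤ dist (f i) (f j) := by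
    intro i j
    have := hg1.dist_le_mul (f i) (f j)
    simpa using this
  have hsum : (∑ i, ∑ j, π i * A i j * dist ((g ∘ f) i) ((g ∘ f) j) ^ 2)
      ≤ ∑ i, ∑ j, π i * A i j * dist (f i) (f j) ^ 2 := by
    apply Finset.sum_le_sum; intro i _
    apply Finset.sum_le_sum; intro j _
    apply mul_le_mul_of_nonneg_left _ (mul_nonneg (hπ i) (hA i j))
    exact pow_le_pow_left₀ dist_nonneg (hlip i j) 2
  calc (∑ i, ∑ j, if (t : ℝ) * ζ ≤ dist (f i) (f j) ^ 2 then π i * (A ^ t) i j else 0)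
      ≤ _ := hle
    _ ≤ C ^ 2 * (ζ / K ^ 2)⁻¹ * ∑ i, ∑ j, π i * A i j * dist ((g ∘ f) i) ((g ∘ f) j) ^ 2 := h1
    _ ≤ C ^ 2 * (ζ / K ^ 2)⁻¹ * ∑ i, ∑ j, π i * A i j * dist (f i) (f j) ^ 2 := by
        apply mul_le_mul_of_nonneg_left hsum
        positivity
    _ = (K * C) ^ 2 * ζ⁻¹ * ∑ i, ∑ j, π i * A i j * dist (f i) (f j) ^ 2 := by
        have : (ζ / K ^ 2)⁻¹ = K ^ 2 * ζ⁻¹ := by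
          field_simp
        rw [this, mul_pow]
        ring
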